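/- Let k ≥ 1 and let χ_k ∈ (0,1) be the geometric constant defined by Leb^k(B_s(x₁) ∩ B_s(x₂)) = χ_k · Leb^k(B_s(0)) for all x₁, x₂ ∈ ℝ^k with |x₁ − x₂| = s > 0. Let E be a metric space, e₀ ∈ E, N ≥ 0 and r₀ > 0. Let B ⊆ ℝ^k and f : B → E be a map satisfying d(f(x), e₀) ≤ N for every x ∈ B, and such that for every x ∈ B and every r ∈ (0, r₀): Leb^k({y ∈ B_r(x) : y ∉ B, or y ∈ B and d(f(y), f(x)) > (N+1)·r}) < (χ_k/2) · Leb^k(B_r(x)). Then f is Lipschitz on B, with Lipschitz constant at most max(2(N+1), 2N/r₀). -/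

import Mathlib

open MeasureTheory Metric Set
open Pointwise

/-- The geometric constant `χ_k` defined by
`Leb^k(B_s(x₁) ∩ B_s(x₂)) = χ_k · Leb^k(B_s(0))` whenever `|x₁ - x₂| = s > 0`
(well defined by translation and scaling invariance of Lebesgue measure; here we take
`s = 1`, `x₁ = 0`, `x₂` a unit coordinate vector). -/
noncomputable def chi (k : ℕ) (hk : 1 ≤ k) : ℝ :=
  (volume (ball (0 : EuclideanSpace ℝ (Fin k)) 1 ∩
      ball (EuclideanSpace.single (⟨0, hk⟩ : Fin k) (1 : ℝ)) 1)).toReal /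
    (volume (ball (0 : EuclideanSpace ℝ (Fin k)) 1)).toReal

lemma ball_inter_vol {k : ℕ} (hk : 1 ≤ k) (x₁ x₂ : EuclideanSpace ℝ (Fin k))
    {s : ℝ} (hs : 0 < s) (hd : dist x₁ x₂ = s) :
    volume (ball x₁ s ∩ ball x₂ s) = ENNReal.ofReal (chi k hk) * volume (ball x₁ s) := by
  set e₁ : EuclideanSpace ℝ (Fin k) := EuclideanSpace.single (⟨0, hk⟩ : Fin k) (1 : ℝ) with he₁
  set u : EuclideanSpace ℝ (Fin k) := s⁻¹ • (x₂ - x₁) with hu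
  have hnu : ‖u‖ = 1 := by
    rw [hu, norm_smul, norm_inv, Real.norm_eq_abs, abs_of_pos hs, ← dist_eq_norm,
      dist_comm, hd]
    field_simp
  -- translation
  have h1 : volume (ball x₁ s ∩ ball x₂ s) =
      volume (ball (0 : EuclideanSpace ℝ (Fin k)) s ∩ ball (x₂ - x₁) s) := by
    have hpre : (· + x₁) ⁻¹' (ball x₁ s ∩ ball x₂ s) =
        ball (0 : EuclideanSpace ℝ (Fin k)) s ∩ ball (x₂ - x₁) s := by
      ext y
      simp only [mem_preimage, mem_inter_iff, mem_ball, dist_eq_norm]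
      rw [show y + x₁ - x₁ = y - 0 by abel, show y + x₁ - x₂ = y - (x₂ - x₁) by abel]
    rw [← hpre, (measurePreserving_add_right volume x₁).measure_preimage
      ((isOpen_ball.inter isOpen_ball).measurableSet.nullMeasurableSet)]
  -- scaling
  have h2 : ball (0 : EuclideanSpace ℝ (Fin k)) s ∩ ball (x₂ - x₁) s =
      s • (ball (0 : EuclideanSpace ℝ (Fin k)) 1 ∩ ball u 1) := by
    rw [smul_set_inter₀ hs.ne', _root_.smul_ball hs.ne', _root_.smul_ball hs.ne', smul_zero, hu,
      smul_inv_smul₀ hs.ne', Real.norm_eq_abs, abs_of_pos hs, mul_one]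
  -- rotation
  have h3 : volume (ball (0 : EuclideanSpace ℝ (Fin k)) 1 ∩ ball u 1) =
      volume (ball (0 : EuclideanSpace ℝ (Fin k)) 1 ∩ ball e₁ 1) := by
    set R := Submodule.reflection (ℝ ∙ (u - e₁))ᗮ with hR
    have hRu : R u = e₁ := Submodule.reflection_sub (by rw [hnu, he₁, EuclideanSpace.norm_single, norm_one])
    have h0 : R ⁻¹' ball (0 : EuclideanSpace ℝ (Fin k)) 1 = ball 0 1 := by
      simpa using R.isometry.preimage_ball 0 1
    have he : R ⁻¹' ball e₁ 1 = ball u 1 := by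
      simp only [← hRu]; exact R.isometry.preimage_ball u 1
    rw [show ball (0 : EuclideanSpace ℝ (Fin k)) 1 ∩ ball u 1 =
        R ⁻¹' (ball 0 1 ∩ ball e₁ 1) by rw [preimage_inter, h0, he],
      R.measurePreserving.measure_preimage
        ((isOpen_ball.inter isOpen_ball).measurableSet.nullMeasurableSet)]
  haveI : Nonempty (Fin k) := ⟨⟨0, hk⟩⟩
  haveI : Nontrivial (EuclideanSpace ℝ (Fin k)) := inferInstance
  have hV0 : volume (ball (0 : EuclideanSpace ℝ (Fin k)) 1) ≠ 0 :=
    (measure_ball_pos _ _ one_pos).ne'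
  have hVt : volume (ball (0 : EuclideanSpace ℝ (Fin k)) 1) ≠ ⊤ := measure_ball_lt_top.ne
  have hAt : volume (ball (0 : EuclideanSpace ℝ (Fin k)) 1 ∩ ball e₁ 1) ≠ ⊤ :=
    (lt_of_le_of_lt (measure_mono inter_subset_left) measure_ball_lt_top).ne
  rw [h1, h2, Measure.addHaar_smul, h3, Measure.addHaar_ball _ _ hs.le,
    finrank_euclideanSpace_fin, abs_of_pos (pow_pos hs k)]
  rw [show ENNReal.ofReal (chi k hk) * (ENNReal.ofReal (s ^ k) * volume
        (ball (0 : EuclideanSpace ℝ (Fin k)) 1))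
      = ENNReal.ofReal (s ^ k) * (ENNReal.ofReal (chi k hk) * volume
        (ball (0 : EuclideanSpace ℝ (Fin k)) 1)) by ring]
  congr 1
  rw [chi, ← ENNReal.ofReal_toReal hVt, ← ENNReal.ofReal_mul (by positivity),
    ENNReal.ofReal_toReal hVt, div_mul_cancel₀ _
      (ENNReal.toReal_ne_zero.mpr ⟨hV0, hVt⟩), ENNReal.ofReal_toReal hAt]

/-- if `f : B → E` is bounded by `N` around `e₀` and, at every point
`x ∈ B` and every scale `r ∈ (0, r₀)`, the set of points of `B_r(x)` which either are outside
`B` or are moved at distance more than `(N+1)r` from `f(x)` has measure less than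
`(χ_k/2)·Leb^k(B_r(x))`, then `f` is Lipschitz on `B` with constant at most
`max (2(N+1)) (2N/r₀)`. -/
theorem lipschitz_of_egorov_bound {E : Type*} [MetricSpace E]
    (k : ℕ) (hk : 1 ≤ k) (e₀ : E) (N r₀ : ℝ) (hN : 0 ≤ N) (hr₀ : 0 < r₀)
    (B : Set (EuclideanSpace ℝ (Fin k))) (f : EuclideanSpace ℝ (Fin k) → E)
    (hbd : ∀ x ∈ B, dist (f x) e₀ ≤ N)
    (hsmall : ∀ x ∈ B, ∀ r ∈ Ioo (0 : ℝ) r₀,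
      volume {y ∈ ball x r | y ∉ B ∨ (y ∈ B ∧ (N + 1) * r < dist (f y) (f x))} <
        ENNReal.ofReal (chi k hk / 2) * volume (ball x r)) :
    ∀ x₁ ∈ B, ∀ x₂ ∈ B,
      dist (f x₁) (f x₂) ≤ max (2 * (N + 1)) (2 * N / r₀) * dist x₁ x₂ := by
  intro x₁ h₁ x₂ h₂
  haveI : Nonempty (Fin k) := ⟨⟨0, hk⟩⟩
  haveI : Nontrivial (EuclideanSpace ℝ (Fin k)) := inferInstance
  set s := dist x₁ x₂ with hs_def
  rcases eq_or_lt_of_le (dist_nonneg : (0:ℝ) ≤ s) with h0 | hs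
  · have hx : x₁ = x₂ := by rwa [eq_comm, dist_eq_zero] at h0
    rw [hs_def, hx, dist_self, dist_self, mul_zero]
  rcases le_or_gt r₀ s with hr | hr
  · -- far apart: use boundedness
    have hle : dist (f x₁) (f x₂) ≤ 2 * N := by
      calc dist (f x₁) (f x₂) ≤ dist (f x₁) e₀ + dist (f x₂) e₀ := dist_triangle_right _ _ _
        _ ≤ N + N := add_le_add (hbd _ h₁) (hbd _ h₂)
        _ = 2 * N := by ring
    have hdiv : (0:ℝ) ≤ 2 * N / r₀ := by positivity
    calc dist (f x₁) (f x₂) ≤ 2 * N := hle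
      _ = 2 * N / r₀ * r₀ := by field_simp
      _ ≤ 2 * N / r₀ * s := by apply mul_le_mul_of_nonneg_left hr hdiv
      _ ≤ max (2 * (N + 1)) (2 * N / r₀) * s :=
          mul_le_mul_of_nonneg_right (le_max_right _ _) hs.le
  · -- close: use the measure bound
    set bad₁ := {y ∈ ball x₁ s | y ∉ B ∨ (y ∈ B ∧ (N + 1) * s < dist (f y) (f x₁))} with hb₁
    set bad₂ := {y ∈ ball x₂ s | y ∉ B ∨ (y ∈ B ∧ (N + 1) * s < dist (f y) (f x₂))} with hb₂
    have hs₁ := hsmall x₁ h₁ s ⟨hs, hr⟩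
    have hs₂ := hsmall x₂ h₂ s ⟨hs, hr⟩
    have hvol_eq : volume (ball x₂ s) = volume (ball x₁ s) := by
      rw [Measure.addHaar_ball _ _ hs.le, Measure.addHaar_ball _ _ hs.le]
    have hnot : ¬ (ball x₁ s ∩ ball x₂ s ⊆ bad₁ ∪ bad₂) := by
      intro hsub
      have h1 : volume (ball x₁ s ∩ ball x₂ s) ≤ volume bad₁ + volume bad₂ :=
        le_trans (measure_mono hsub) (measure_union_le _ _)
      have h2 : volume bad₁ + volume bad₂ <
          ENNReal.ofReal (chi k hk / 2) * volume (ball x₁ s) +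
          ENNReal.ofReal (chi k hk / 2) * volume (ball x₂ s) := ENNReal.add_lt_add hs₁ hs₂
      have h3 : ENNReal.ofReal (chi k hk / 2) * volume (ball x₁ s) +
          ENNReal.ofReal (chi k hk / 2) * volume (ball x₂ s) =
          ENNReal.ofReal (chi k hk) * volume (ball x₁ s) := by
        have hchi : (0:ℝ) ≤ chi k hk / 2 := by
          unfold chi; positivity
        rw [hvol_eq, ← add_mul, ← ENNReal.ofReal_add hchi hchi]
        norm_num
      rw [h3, ← ball_inter_vol hk x₁ x₂ hs hs_def.symm] at h2
      exact absurd (lt_of_le_of_lt h1 h2) (lt_irrefl _)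
    obtain ⟨y, hy, hybad⟩ := not_subset.mp hnot
    have hy₁ : y ∉ bad₁ := fun h => hybad (Or.inl h)
    have hy₂ : y ∉ bad₂ := fun h => hybad (Or.inr h)
    rw [hb₁, mem_setOf_eq, not_and_or] at hy₁
    rw [hb₂, mem_setOf_eq, not_and_or] at hy₂
    have hyB₁ : y ∈ B ∧ dist (f y) (f x₁) ≤ (N + 1) * s := by
      rcases hy₁ with h | h
      · exact absurd hy.1 h
      · push_neg at h
        exact ⟨h.1, (h.2 h.1)⟩
    have hyB₂ : y ∈ B ∧ dist (f y) (f x₂) ≤ (N + 1) * s := by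
      rcases hy₂ with h | h
      · exact absurd hy.2 h
      · push_neg at h
        exact ⟨h.1, (h.2 h.1)⟩
    calc dist (f x₁) (f x₂) ≤ dist (f y) (f x₁) + dist (f y) (f x₂) := dist_triangle_left _ _ _
      _ ≤ (N + 1) * s + (N + 1) * s := add_le_add hyB₁.2 hyB₂.2
      _ = 2 * (N + 1) * s := by ring
      _ ≤ max (2 * (N + 1)) (2 * N / r₀) * s :=
          mul_le_mul_of_nonneg_right (le_max_left _ _) hs.le
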